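/- For the translation ℤ-action x ↦ x + k on ℝ and a fixed irrational β, the coding sequence j : ℤ → {0,1} given by j(n) = 1 if {nβ} ∈ [0, 1/2) and j(n) = 0 otherwise (where {·} is the fractional part) is not eventually periodic. -/

import Mathlib

/-- For irrational β, the coding sequence of the orbit nβ mod 1 with respect to
the partition [0,1/2) ∪ [1/2,1) of the circle is not eventually periodic. -/
theorem coding_sequence_not_eventually_periodic (β : ℝ) (hβ : Irrational β)
    (j : ℤ → ℕ)
    (hj : ∀ n : ℤ, j n = if Int.fract ((n : ℝ) * β) < 1 / 2 then 1 else 0) :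
    ¬ ∃ (N : ℤ) (p : ℤ), 0 < p ∧ ∀ n ≥ N, j (n + p) = j n := by
  rintro ⟨N, p, hp, hper⟩
  -- helper lemmas on fract
  have fract_lo : ∀ y : ℝ, 0 ≤ y → y < 1 → Int.fract y = y := by
    intro y h1 h2; exact Int.fract_eq_self.mpr ⟨h1, h2⟩
  have fract_hi : ∀ y : ℝ, 1 ≤ y → y < 2 → Int.fract y = y - 1 := by
    intro y h1 h2
    have h := Int.fract_add_intCast (y - 1) 1
    have hy : y - 1 + ((1 : ℤ) : ℝ) = y := by push_cast; ring
    rw [hy] at h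
    rw [h, Int.fract_eq_self.mpr ⟨by linarith, by linarith⟩]
  set γ : ℝ := Int.fract ((p : ℝ) * β) with hγdef
  have hpβ : Irrational ((p : ℝ) * β) := by
    have := hβ.intCast_mul (ne_of_gt hp)
    simpa [mul_comm] using this
  have hγirr : Irrational γ := by
    simp only [hγdef, Int.fract]
    exact hpβ.sub_intCast _
  have hγ0 : 0 < γ := by
    rcases lt_or_eq_of_le (Int.fract_nonneg ((p : ℝ) * β)) with h | h
    · exact h
    · exact absurd h.symm (by simpa using hγirr.ne_int 0)
  have hγ1 : γ < 1 := Int.fract_lt_one _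
  have hγhalfne : γ ≠ 1 / 2 := by
    intro h
    exact hγirr.ne_rat (1 / 2) (by rw [h]; norm_num)
  -- the orbit points
  set t : ℕ → ℝ := fun k => Int.fract ((N : ℝ) * β + (k : ℝ) * ((p : ℝ) * β)) with ht
  set c : ℝ := t 0 with hc
  have hc0 : 0 ≤ c := Int.fract_nonneg _
  have hc1 : c < 1 := Int.fract_lt_one _
  have htk0 : ∀ k, 0 ≤ t k := fun k => Int.fract_nonneg _
  have htk1 : ∀ k, t k < 1 := fun k => Int.fract_lt_one _
  -- periodicity: all j (N + k p) equal
  have hsame : ∀ k : ℕ, j (N + (k : ℤ) * p) = j N := by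
    intro k
    induction k with
    | zero => simp
    | succ k ih =>
      have h1 : N + ((k : ℤ) + 1) * p = (N + (k : ℤ) * p) + p := by ring
      have h2 : N ≤ N + (k : ℤ) * p := by
        have : (0 : ℤ) ≤ (k : ℤ) * p := mul_nonneg (Int.natCast_nonneg k) hp.le
        linarith
      have := hper (N + (k : ℤ) * p) h2
      push_cast
      rw [h1, this, ih]
  -- t k always on the same side of 1/2 as c
  have hiff : ∀ k : ℕ, (t k < 1 / 2 ↔ c < 1 / 2) := by
    intro k
    have h1 := hj (N + (k : ℤ) * p)
    have h2 := hj N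
    have h3 := hsame k
    rw [h1, h2] at h3
    have et : Int.fract (((N + (k : ℤ) * p : ℤ) : ℝ) * β) = t k := by
      simp only [ht]; congr 1; push_cast; ring
    have ec : Int.fract ((N : ℝ) * β) = c := by
      simp only [hc, ht]; norm_num
    rw [et, ec] at h3
    split_ifs at h3 <;> tauto
  -- recursion
  have key : ∀ k : ℕ, t (k + 1) = Int.fract (t k + γ) := by
    intro k
    have e : (N : ℝ) * β + ((k : ℕ) + 1 : ℝ) * ((p : ℝ) * β)
        = (t k + γ) + ((⌊(N : ℝ) * β + (k : ℝ) * ((p : ℝ) * β)⌋ + ⌊(p : ℝ) * β⌋ : ℤ) : ℝ) := by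
      simp only [ht, hγdef, Int.fract]
      push_cast; ring
    have : t (k + 1) = Int.fract ((N : ℝ) * β + ((k : ℕ) + 1 : ℝ) * ((p : ℝ) * β)) := by
      simp only [ht]; push_cast; ring_nf
    rw [this, e, Int.fract_add_intCast]
  by_cases hcase : c < 1 / 2
  · rcases lt_or_gt_of_ne hγhalfne with hγh | hγh
    · -- c < 1/2, γ < 1/2 : t k = c + k γ, grows past 1/2
      have claim : ∀ k : ℕ, t k = c + (k : ℝ) * γ := by
        intro k
        induction k with
        | zero => simp [hc]
        | succ k ih =>
          have hk : t k < 1 / 2 := (hiff k).mpr hcase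
          have h0 := htk0 k
          rw [key k, fract_lo _ (by linarith) (by linarith), ih]
          push_cast; ring
      obtain ⟨k, hk⟩ := exists_nat_gt ((1 / 2) / γ)
      have hk' : (1 / 2 : ℝ) < (k : ℝ) * γ := (div_lt_iff₀ hγ0).mp hk
      have := (hiff k).mpr hcase
      rw [claim k] at this
      linarith
    · -- c < 1/2, γ > 1/2 : t k = c + k (γ - 1), decreases below 0
      have claim : ∀ k : ℕ, t k = c + (k : ℝ) * (γ - 1) := by
        intro k
        induction k with
        | zero => simp [hc]
        | succ k ih =>
          have hk : t k < 1 / 2 := (hiff k).mpr hcase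
          have hk1 : t (k + 1) < 1 / 2 := (hiff (k + 1)).mpr hcase
          have h0 := htk0 k
          have hge : 1 ≤ t k + γ := by
            by_contra hlt
            push_neg at hlt
            have := key k
            rw [fract_lo _ (by linarith) hlt] at this
            linarith
          rw [key k, fract_hi _ hge (by linarith), ih]
          push_cast; ring
      obtain ⟨k, hk⟩ := exists_nat_gt (c / (1 - γ))
      have hk' : c < (k : ℝ) * (1 - γ) := (div_lt_iff₀ (by linarith)).mp hk
      have := htk0 k
      rw [claim k] at this
      nlinarith
  · -- c ≥ 1/2
    push_neg at hcase
    have hside : ∀ k : ℕ, 1 / 2 ≤ t k := by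
      intro k
      by_contra h
      push_neg at h
      exact absurd ((hiff k).mp h) (not_lt.mpr hcase)
    rcases lt_or_gt_of_ne hγhalfne with hγh | hγh
    · -- c ≥ 1/2, γ < 1/2 : t k = c + k γ, grows past 1
      have claim : ∀ k : ℕ, t k = c + (k : ℝ) * γ := by
        intro k
        induction k with
        | zero => simp [hc]
        | succ k ih =>
          have hk := hside k
          have hk1 := hside (k + 1)
          have h1 := htk1 k
          have hlt : t k + γ < 1 := by
            by_contra hge
            push_neg at hge
            have := key k
            rw [fract_hi _ hge (by linarith)] at this
            linarith
          rw [key k, fract_lo _ (by linarith [htk0 k]) hlt, ih]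
          push_cast; ring
      obtain ⟨k, hk⟩ := exists_nat_gt (1 / γ)
      have hk' : (1 : ℝ) < (k : ℝ) * γ := (div_lt_iff₀ hγ0).mp hk
      have := htk1 k
      rw [claim k] at this
      linarith
    · -- c ≥ 1/2, γ > 1/2 : t k = c + k (γ - 1), decreases below 1/2
      have claim : ∀ k : ℕ, t k = c + (k : ℝ) * (γ - 1) := by
        intro k
        induction k with
        | zero => simp [hc]
        | succ k ih =>
          have hk := hside k
          have h1 := htk1 k
          have hge : 1 ≤ t k + γ := by linarith
          rw [key k, fract_hi _ hge (by linarith), ih]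
          push_cast; ring
      obtain ⟨k, hk⟩ := exists_nat_gt (c / (1 - γ))
      have hk' : c < (k : ℝ) * (1 - γ) := (div_lt_iff₀ (by linarith)).mp hk
      have := hside k
      rw [claim k] at this
      nlinarith
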